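/- If the spectral localizer L_λ(A₁,A₂,A₃) has a zero eigenvalue, then there exists a unit vector v̂ ∈ ℂ^N such that ‖(Aⱼ - λⱼ)v̂‖ ≤ √3 · δ^{1/2} for each j ∈ {1,2,3}, where δ = max over pairs of ‖[Aᵢ,Aⱼ]‖. -/

import Mathlib

open Matrix
open scoped Kronecker Matrix.Norms.L2Operator

noncomputable section

def pauli1 : Matrix (Fin 2) (Fin 2) ℂ := !![0, 1; 1, 0]
def pauli2 : Matrix (Fin 2) (Fin 2) ℂ := !![0, -Complex.I; Complex.I, 0]
def pauli3 : Matrix (Fin 2) (Fin 2) ℂ := !![1, 0; 0, -1]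

def localizer {N : ℕ} (A₁ A₂ A₃ : Matrix (Fin N) (Fin N) ℂ) (lam : Fin 3 → ℝ) :
    Matrix (Fin 2 × Fin N) (Fin 2 × Fin N) ℂ :=
  pauli1 ⊗ₖ (A₁ - (lam 0 : ℂ) • 1) + pauli2 ⊗ₖ (A₂ - (lam 1 : ℂ) • 1)
    + pauli3 ⊗ₖ (A₃ - (lam 2 : ℂ) • 1)

/-- Shorthand for the identification of `Fin N → ℂ` with Euclidean space. -/
def esv {N : ℕ} : (Fin N → ℂ) → EuclideanSpace ℂ (Fin N) := (WithLp.equiv 2 (Fin N → ℂ)).symm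

lemma esv_zero {N : ℕ} : esv (0 : Fin N → ℂ) = 0 := rfl

lemma esv_dot_self {N : ℕ} (x : Fin N → ℂ) : star x ⬝ᵥ x = ((‖esv x‖ : ℝ) : ℂ) ^ 2 := by
  have h : (inner ℂ (esv x) (esv x) : ℂ) = star x ⬝ᵥ x := by
    rw [EuclideanSpace.inner_eq_star_dotProduct, dotProduct_comm]; rfl
  rw [← h]; exact inner_self_eq_norm_sq_to_K _

lemma esv_dot_bound {N : ℕ} (M : Matrix (Fin N) (Fin N) ℂ) (x y : Fin N → ℂ) :
    ‖star x ⬝ᵥ (M *ᵥ y)‖ ≤ ‖M‖ * (‖esv x‖ * ‖esv y‖) := by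
  calc ‖star x ⬝ᵥ (M *ᵥ y)‖ = ‖(inner ℂ (esv x) (esv (M *ᵥ y)) : ℂ)‖ :=
        by rw [EuclideanSpace.inner_eq_star_dotProduct, dotProduct_comm]; rfl
    _ ≤ ‖esv x‖ * ‖esv (M *ᵥ y)‖ := norm_inner_le_norm _ _
    _ ≤ ‖esv x‖ * (‖M‖ * ‖esv y‖) :=
        mul_le_mul_of_nonneg_left (M.l2_opNorm_mulVec (esv y)) (norm_nonneg _)
    _ = ‖M‖ * (‖esv x‖ * ‖esv y‖) := by ring

lemma kronBlock {N : ℕ} (M : Matrix (Fin 2) (Fin 2) ℂ) (C : Matrix (Fin N) (Fin N) ℂ)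
    (u : Fin 2 × Fin N → ℂ) (i : Fin 2) (n : Fin N) :
    (M ⊗ₖ C).mulVec u (i, n) = M i 0 * C.mulVec (fun l => u (0, l)) n
      + M i 1 * C.mulVec (fun l => u (1, l)) n := by
  simp [Matrix.mulVec, dotProduct, Fintype.sum_prod_type, Fin.sum_univ_two,
    Finset.mul_sum, mul_assoc]

lemma commShift {N : ℕ} (A A' : Matrix (Fin N) (Fin N) ℂ) (c c' : ℂ) :
    (A - c • 1) * (A' - c' • 1) - (A' - c' • 1) * (A - c • 1) = ⁅A, A'⁆ := by
  simp only [Ring.lie_def, sub_mul, mul_sub, smul_mul_assoc, mul_smul_comm, one_mul, mul_one,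
    smul_smul]
  module

theorem approx_joint_eigenvector_of_localizer_kernel {N : ℕ}
    (A : Fin 3 → Matrix (Fin N) (Fin N) ℂ) (hA : ∀ j, (A j).IsHermitian)
    (δ : ℝ) (hδ : ∀ i j, ‖⁅A i, A j⁆‖ ≤ δ)
    (lam : Fin 3 → ℝ)
    (hker : ∃ u : Fin 2 × Fin N → ℂ, u ≠ 0 ∧
      (localizer (A 0) (A 1) (A 2) lam).mulVec u = 0) :
    ∃ v : EuclideanSpace ℂ (Fin N), ‖v‖ = 1 ∧
      ∀ j, ‖((WithLp.equiv 2 (Fin N → ℂ)).symm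
          ((A j - (lam j : ℂ) • 1).mulVec v))‖ ≤ Real.sqrt 3 * δ ^ ((1 : ℝ)/2) := by
  obtain ⟨u, hu, hLu⟩ := hker
  have hδ0 : 0 ≤ δ := le_trans (norm_nonneg _) (hδ 0 0)
  set B : Fin 3 → Matrix (Fin N) (Fin N) ℂ := fun j => A j - (lam j : ℂ) • 1 with hB
  have hBj : ∀ j, A j - ((lam j : ℝ) : ℂ) • 1 = B j := by intro j; rw [hB]
  set u₀ : Fin N → ℂ := fun n => u (0, n) with hu₀
  set u₁ : Fin N → ℂ := fun n => u (1, n) with hu₁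
  have hloc : localizer (A 0) (A 1) (A 2) lam
      = pauli1 ⊗ₖ B 0 + pauli2 ⊗ₖ B 1 + pauli3 ⊗ₖ B 2 := rfl
  have hBH : ∀ j, (B j)ᴴ = B j := by
    intro j
    rw [hB]
    simp [conjTranspose_sub, conjTranspose_smul, conjTranspose_one, (hA j).eq, Complex.star_def,
      Complex.conj_ofReal]
  -- the two block equations
  have h0 : ∀ n, ((B 2) *ᵥ u₀) n + (((B 0) *ᵥ u₁) n - Complex.I * (((B 1) *ᵥ u₁) n)) = 0 := by
    intro n
    have h := congrFun hLu (0, n)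
    rw [hloc] at h
    simp only [add_mulVec, Pi.add_apply, kronBlock, Pi.zero_apply] at h
    simp [pauli1, pauli2, pauli3] at h
    linear_combination h
  have h1 : ∀ n, (((B 0) *ᵥ u₀) n + Complex.I * (((B 1) *ᵥ u₀) n)) - ((B 2) *ᵥ u₁) n = 0 := by
    intro n
    have h := congrFun hLu (1, n)
    rw [hloc] at h
    simp only [add_mulVec, Pi.add_apply, kronBlock, Pi.zero_apply] at h
    simp [pauli1, pauli2, pauli3] at h
    linear_combination h
  have hr₀ : (B 2) *ᵥ u₀ + ((B 0) *ᵥ u₁ - Complex.I • ((B 1) *ᵥ u₁)) = 0 := by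
    funext n; simpa using h0 n
  have hr₁ : ((B 0) *ᵥ u₀ + Complex.I • ((B 1) *ᵥ u₀)) - (B 2) *ᵥ u₁ = 0 := by
    funext n; simpa using h1 n
  -- adjoint manipulation
  have hT : ∀ (j j' : Fin 3) (x y : Fin N → ℂ),
      star ((B j) *ᵥ x) ⬝ᵥ ((B j') *ᵥ y) = star x ⬝ᵥ ((B j * B j') *ᵥ y) := by
    intro j j' x y
    rw [star_mulVec, ← dotProduct_mulVec, hBH j, mulVec_mulVec]
  -- the key algebraic identity
  have hmain : star u₀ ⬝ᵥ ((B 0 * B 0) *ᵥ u₀) + star u₀ ⬝ᵥ ((B 1 * B 1) *ᵥ u₀)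
      + star u₀ ⬝ᵥ ((B 2 * B 2) *ᵥ u₀)
      + star u₁ ⬝ᵥ ((B 0 * B 0) *ᵥ u₁) + star u₁ ⬝ᵥ ((B 1 * B 1) *ᵥ u₁)
      + star u₁ ⬝ᵥ ((B 2 * B 2) *ᵥ u₁)
    = Complex.I * (star u₀ ⬝ᵥ ((B 1 * B 0 - B 0 * B 1) *ᵥ u₀))
      - Complex.I * (star u₁ ⬝ᵥ ((B 1 * B 0 - B 0 * B 1) *ᵥ u₁))
      - star u₀ ⬝ᵥ ((B 2 * B 0 - B 0 * B 2) *ᵥ u₁)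
      + Complex.I * (star u₀ ⬝ᵥ ((B 2 * B 1 - B 1 * B 2) *ᵥ u₁))
      + star u₁ ⬝ᵥ ((B 2 * B 0 - B 0 * B 2) *ᵥ u₀)
      + Complex.I * (star u₁ ⬝ᵥ ((B 2 * B 1 - B 1 * B 2) *ᵥ u₀)) := by
    have h2 : star ((B 2) *ᵥ u₀ + ((B 0) *ᵥ u₁ - Complex.I • ((B 1) *ᵥ u₁)))
          ⬝ᵥ ((B 2) *ᵥ u₀ + ((B 0) *ᵥ u₁ - Complex.I • ((B 1) *ᵥ u₁)))
        + star (((B 0) *ᵥ u₀ + Complex.I • ((B 1) *ᵥ u₀)) - (B 2) *ᵥ u₁)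
          ⬝ᵥ (((B 0) *ᵥ u₀ + Complex.I • ((B 1) *ᵥ u₀)) - (B 2) *ᵥ u₁) = 0 := by
      rw [hr₀, hr₁]; simp
    simp only [star_add, star_sub, star_smul, Complex.star_def, Complex.conj_I,
      add_dotProduct, sub_dotProduct, dotProduct_add, dotProduct_sub,
      smul_dotProduct, dotProduct_smul, smul_eq_mul, neg_mul, mul_neg, neg_smul, neg_dotProduct,
      hT] at h2
    simp only [sub_mulVec, dotProduct_sub]
    linear_combination h2 + (star u₀ ⬝ᵥ ((B 1 * B 1) *ᵥ u₀)
      + star u₁ ⬝ᵥ ((B 1 * B 1) *ᵥ u₁)) * Complex.I_sq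
  -- norms
  have hd : ∀ (j : Fin 3) (x : Fin N → ℂ),
      star x ⬝ᵥ ((B j * B j) *ᵥ x) = ((‖esv ((B j) *ᵥ x)‖ : ℝ) : ℂ) ^ 2 := by
    intro j x
    rw [← hT j j x x, esv_dot_self]
  -- commutator bounds
  have hgb : ∀ (i j : Fin 3) (x y : Fin N → ℂ),
      ‖star x ⬝ᵥ ((B i * B j - B j * B i) *ᵥ y)‖ ≤ δ * (‖esv x‖ * ‖esv y‖) := by
    intro i j x y
    have hcm : B i * B j - B j * B i = ⁅A i, A j⁆ := by
      rw [hB]; exact commShift (A i) (A j) _ _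
    refine le_trans (esv_dot_bound _ _ _) ?_
    have : ‖B i * B j - B j * B i‖ ≤ δ := by rw [hcm]; exact hδ i j
    exact mul_le_mul_of_nonneg_right this (by positivity)
  have hS : ∀ x : Fin N → ℂ, (∑ j : Fin 3, ‖esv ((B j) *ᵥ x)‖ ^ 2)
      = ‖esv ((B 0) *ᵥ x)‖ ^ 2 + ‖esv ((B 1) *ᵥ x)‖ ^ 2 + ‖esv ((B 2) *ᵥ x)‖ ^ 2 := by
    intro x; rw [Fin.sum_univ_three]
  -- real inequality
  have key : (∑ j : Fin 3, ‖esv ((B j) *ᵥ u₀)‖ ^ 2) + (∑ j : Fin 3, ‖esv ((B j) *ᵥ u₁)‖ ^ 2)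
      ≤ 3 * δ * (‖esv u₀‖ ^ 2 + ‖esv u₁‖ ^ 2) := by
    rw [hS u₀, hS u₁]
    rw [hd 0 u₀, hd 1 u₀, hd 2 u₀, hd 0 u₁, hd 1 u₁, hd 2 u₁] at hmain
    set R : ℂ := Complex.I * (star u₀ ⬝ᵥ ((B 1 * B 0 - B 0 * B 1) *ᵥ u₀))
      - Complex.I * (star u₁ ⬝ᵥ ((B 1 * B 0 - B 0 * B 1) *ᵥ u₁))
      - star u₀ ⬝ᵥ ((B 2 * B 0 - B 0 * B 2) *ᵥ u₁)
      + Complex.I * (star u₀ ⬝ᵥ ((B 2 * B 1 - B 1 * B 2) *ᵥ u₁))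
      + star u₁ ⬝ᵥ ((B 2 * B 0 - B 0 * B 2) *ᵥ u₀)
      + Complex.I * (star u₁ ⬝ᵥ ((B 2 * B 1 - B 1 * B 2) *ᵥ u₀)) with hR
    have h3 : ‖esv ((B 0) *ᵥ u₀)‖ ^ 2 + ‖esv ((B 1) *ᵥ u₀)‖ ^ 2 + ‖esv ((B 2) *ᵥ u₀)‖ ^ 2
        + ‖esv ((B 0) *ᵥ u₁)‖ ^ 2 + ‖esv ((B 1) *ᵥ u₁)‖ ^ 2 + ‖esv ((B 2) *ᵥ u₁)‖ ^ 2
        = R.re := by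
      have := congrArg Complex.re hmain
      simpa [← Complex.ofReal_pow] using this
    have hRb : ‖R‖ ≤ δ * (‖esv u₀‖ * ‖esv u₀‖) + δ * (‖esv u₁‖ * ‖esv u₁‖)
        + δ * (‖esv u₀‖ * ‖esv u₁‖) + δ * (‖esv u₀‖ * ‖esv u₁‖)
        + δ * (‖esv u₁‖ * ‖esv u₀‖) + δ * (‖esv u₁‖ * ‖esv u₀‖) := by
      rw [hR]
      refine le_trans (norm_add_le _ _) ?_
      refine add_le_add ?_ ?_
      · refine le_trans (norm_add_le _ _) ?_
        refine add_le_add ?_ ?_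
        · refine le_trans (norm_add_le _ _) ?_
          refine add_le_add ?_ ?_
          · refine le_trans (norm_sub_le _ _) ?_
            refine add_le_add ?_ ?_
            · refine le_trans (norm_sub_le _ _) ?_
              refine add_le_add ?_ ?_
              · rw [norm_mul, Complex.norm_I, one_mul]; exact hgb 1 0 u₀ u₀
              · rw [norm_mul, Complex.norm_I, one_mul]; exact hgb 1 0 u₁ u₁
            · exact hgb 2 0 u₀ u₁
          · rw [norm_mul, Complex.norm_I, one_mul]; exact hgb 2 1 u₀ u₁
        · exact hgb 2 0 u₁ u₀
      · rw [norm_mul, Complex.norm_I, one_mul]; exact hgb 2 1 u₁ u₀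
    have h4 : R.re ≤ ‖R‖ := Complex.re_le_norm R
    nlinarith [sq_nonneg (‖esv u₀‖ - ‖esv u₁‖), h3, h4, hRb, hδ0]
  -- select the better half
  have hnz : u₀ ≠ 0 ∨ u₁ ≠ 0 := by
    by_contra h
    push_neg at h
    apply hu
    funext p
    obtain ⟨i, n⟩ := p
    fin_cases i
    · exact congrFun h.1 n
    · exact congrFun h.2 n
  have hsingle : ∀ (x : Fin N → ℂ) (j : Fin 3),
      ‖esv ((B j) *ᵥ x)‖ ^ 2 ≤ ∑ i : Fin 3, ‖esv ((B i) *ᵥ x)‖ ^ 2 :=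
    fun x j => Finset.single_le_sum (f := fun i => ‖esv ((B i) *ᵥ x)‖ ^ 2)
      (fun i _ => sq_nonneg _) (Finset.mem_univ j)
  have hsnn : ∀ x : Fin N → ℂ, (0:ℝ) ≤ ∑ i : Fin 3, ‖esv ((B i) *ᵥ x)‖ ^ 2 :=
    fun x => Finset.sum_nonneg fun i _ => sq_nonneg _
  have sel : ∃ x : Fin N → ℂ, x ≠ 0 ∧
      (∑ i : Fin 3, ‖esv ((B i) *ᵥ x)‖ ^ 2) ≤ 3 * δ * ‖esv x‖ ^ 2 := by
    by_cases h1z : u₁ = 0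
    · have hu0 : u₀ ≠ 0 := by rcases hnz with h | h; exact h; exact absurd h1z h
      refine ⟨u₀, hu0, ?_⟩
      have hz1 : (∑ i : Fin 3, ‖esv ((B i) *ᵥ u₁)‖ ^ 2) = 0 := by
        rw [h1z]
        simp [Matrix.mulVec_zero, esv_zero]
      have hzn : ‖esv u₁‖ = 0 := by rw [h1z, esv_zero, norm_zero]
      rw [hzn] at key
      rw [hz1] at key
      linarith [key]
    · by_cases h0z : u₀ = 0
      · refine ⟨u₁, h1z, ?_⟩
        have hz0 : (∑ i : Fin 3, ‖esv ((B i) *ᵥ u₀)‖ ^ 2) = 0 := by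
          rw [h0z]
          simp [Matrix.mulVec_zero, esv_zero]
        have hzn : ‖esv u₀‖ = 0 := by rw [h0z, esv_zero, norm_zero]
        rw [hzn] at key
        rw [hz0] at key
        linarith [key]
      · have hp0 : 0 < ‖esv u₀‖ := by
          refine norm_pos_iff.mpr fun h => h0z ?_
          exact (WithLp.equiv 2 (Fin N → ℂ)).symm.injective h
        have hp1 : 0 < ‖esv u₁‖ := by
          refine norm_pos_iff.mpr fun h => h1z ?_
          exact (WithLp.equiv 2 (Fin N → ℂ)).symm.injective h
        rcases le_total ((∑ i : Fin 3, ‖esv ((B i) *ᵥ u₀)‖ ^ 2) * ‖esv u₁‖ ^ 2)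
            ((∑ i : Fin 3, ‖esv ((B i) *ᵥ u₁)‖ ^ 2) * ‖esv u₀‖ ^ 2) with hle | hle
        · refine ⟨u₀, h0z, ?_⟩
          nlinarith [mul_le_mul_of_nonneg_right key (sq_nonneg ‖esv u₀‖), hle,
            pow_pos hp0 2, pow_pos hp1 2, hsnn u₀, hsnn u₁]
        · refine ⟨u₁, h1z, ?_⟩
          nlinarith [mul_le_mul_of_nonneg_right key (sq_nonneg ‖esv u₁‖), hle,
            pow_pos hp0 2, pow_pos hp1 2, hsnn u₀, hsnn u₁]
  obtain ⟨x, hx0, hxb⟩ := sel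
  have hxb' : ∀ j : Fin 3, ‖esv ((B j) *ᵥ x)‖ ^ 2 ≤ 3 * δ * ‖esv x‖ ^ 2 :=
    fun j => le_trans (hsingle x j) hxb
  have hxr : 0 < ‖esv x‖ := by
    refine norm_pos_iff.mpr fun h => hx0 ?_
    exact (WithLp.equiv 2 (Fin N → ℂ)).symm.injective h
  refine ⟨esv ((‖esv x‖ : ℂ)⁻¹ • x), ?_, ?_⟩
  · have h1 : esv ((‖esv x‖ : ℂ)⁻¹ • x) = ((‖esv x‖ : ℝ) : ℂ)⁻¹ • esv x := rfl
    rw [h1, norm_smul]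
    simp [abs_of_pos hxr, inv_mul_cancel₀ hxr.ne']
  · intro j
    have hrw : (A j - ((lam j : ℝ) : ℂ) • 1) *ᵥ (esv ((‖esv x‖ : ℂ)⁻¹ • x))
        = ((‖esv x‖ : ℝ) : ℂ)⁻¹ • ((B j) *ᵥ x) := by
      rw [hBj j]
      exact Matrix.mulVec_smul _ _ _
    have hgoal : ‖(WithLp.equiv 2 (Fin N → ℂ)).symm
        ((A j - ((lam j : ℝ) : ℂ) • 1) *ᵥ (esv ((‖esv x‖ : ℂ)⁻¹ • x)))‖
        = ‖esv x‖⁻¹ * ‖esv ((B j) *ᵥ x)‖ := by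
      rw [hrw]
      have h2 : (WithLp.equiv 2 (Fin N → ℂ)).symm (((‖esv x‖ : ℝ) : ℂ)⁻¹ • ((B j) *ᵥ x))
          = ((‖esv x‖ : ℝ) : ℂ)⁻¹ • esv ((B j) *ᵥ x) := rfl
      rw [h2, norm_smul]
      simp [abs_of_pos hxr]
    rw [hgoal]
    have hb := hxb' j
    have hs : Real.sqrt 3 * δ ^ ((1 : ℝ)/2) = Real.sqrt (3 * δ) := by
      rw [Real.sqrt_mul (by norm_num : (0:ℝ) ≤ 3), ← Real.sqrt_eq_rpow]
    rw [hs]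
    have hwj : ‖esv ((B j) *ᵥ x)‖ ≤ Real.sqrt (3 * δ) * ‖esv x‖ := by
      have h5 : Real.sqrt (‖esv ((B j) *ᵥ x)‖ ^ 2) ≤ Real.sqrt (3 * δ * ‖esv x‖ ^ 2) :=
        Real.sqrt_le_sqrt hb
      rwa [Real.sqrt_sq (norm_nonneg _), Real.sqrt_mul (by positivity : (0:ℝ) ≤ 3 * δ),
        Real.sqrt_sq (norm_nonneg _)] at h5
    calc ‖esv x‖⁻¹ * ‖esv ((B j) *ᵥ x)‖
        ≤ ‖esv x‖⁻¹ * (Real.sqrt (3 * δ) * ‖esv x‖) :=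
          mul_le_mul_of_nonneg_left hwj (by positivity)
      _ = Real.sqrt (3 * δ) := by field_simp
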